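/- Let ε > 0, let η ≥ 10ε, let i ∈ εℤ², and let E ⊆ εℤ². If (#N_ε(j), #NN_ε(j)) ∈ {(3,2), (4,4)} for every j ∈ Z_ε(Q_η(i)) ∖ E, then E is locally flat in Q_{η−4ε}(i). -/

import Mathlib

open Set Filter MeasureTheory Metric
open scoped BigOperators ENNReal Topology

noncomputable section

attribute [local instance] Classical.propDecidable

/-- Two-dimensional Euclidean space. -/
abbrev E2 := EuclideanSpace ℝ (Fin 2)

/-- `x` is a point of the lattice `εℤ²`. -/
def lat2 (ε : ℝ) (x : E2) : Prop := ∀ k, ∃ n : ℤ, x k = ε * n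

/-- The half-open square `Q_ρ(x) = x + ρ[-1/2,1/2)²`. -/
def sq2 (ρ : ℝ) (x : E2) : Set E2 := {y | ∀ k, x k - ρ / 2 ≤ y k ∧ y k < x k + ρ / 2}

/-- `k̂ := k + ε(1/2,1/2)`. -/
def hat2 (ε : ℝ) (k : E2) : E2 := WithLp.toLp 2 (fun j => k j + ε / 2)

/-- The point `(a,b) ∈ ℝ²`. -/
def pt2 (a b : ℝ) : E2 := WithLp.toLp 2 (fun j => if j = 0 then a else b)

/-- The unoccupied nearest neighbours of `j` (lattice points outside the void set `E`
at Euclidean distance `ε`). -/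
def Nset (ε : ℝ) (E : Set E2) (j : E2) : Set E2 :=
  {p | lat2 ε p ∧ p ∉ E ∧ dist p j = ε}

/-- The unoccupied next-to-nearest neighbours of `j` (lattice points outside `E` at
Euclidean distance `√2·ε`). -/
def NNset (ε : ℝ) (E : Set E2) (j : E2) : Set E2 :=
  {p | lat2 ε p ∧ p ∉ E ∧ dist p j = Real.sqrt 2 * ε}

/-- `j` has one of the two admissible neighbourhood statistics `(3,2)` or `(4,4)`. -/
def goodPt (ε : ℝ) (E : Set E2) (j : E2) : Prop :=
  ((Nset ε E j).ncard = 3 ∧ (NNset ε E j).ncard = 2) ∨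
    ((Nset ε E j).ncard = 4 ∧ (NNset ε E j).ncard = 4)

/-- `E` is locally flat in `Q_η(x)` (two-dimensional version): on every `2ε`-square
`Q_{2ε}(k̂)` intersecting `Q_η(x)`, the set `E` is either everything, or empty, or one
of the four half-square pairs. -/
def LocallyFlat2 (ε η : ℝ) (E : Set E2) (x : E2) : Prop :=
  ∀ k : E2, lat2 ε k → (sq2 η x ∩ sq2 (2 * ε) (hat2 ε k)).Nonempty →
    E ∩ sq2 (2 * ε) (hat2 ε k) = {p | lat2 ε p ∧ p ∈ sq2 (2 * ε) (hat2 ε k)} ∨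
    E ∩ sq2 (2 * ε) (hat2 ε k) = ∅ ∨
    E ∩ sq2 (2 * ε) (hat2 ε k) = {k, pt2 (k 0 + ε) (k 1)} ∨
    E ∩ sq2 (2 * ε) (hat2 ε k) = {pt2 (k 0) (k 1 + ε), pt2 (k 0 + ε) (k 1 + ε)} ∨
    E ∩ sq2 (2 * ε) (hat2 ε k) = {k, pt2 (k 0) (k 1 + ε)} ∨
    E ∩ sq2 (2 * ε) (hat2 ε k) = {pt2 (k 0 + ε) (k 1), pt2 (k 0 + ε) (k 1 + ε)}


def b2n (P : Prop) : ℕ := if P then 1 else 0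

lemma b2n_pos {P : Prop} (h : P) : b2n P = 1 := if_pos h
lemma b2n_neg {P : Prop} (h : ¬P) : b2n P = 0 := if_neg h

lemma known1 {A B C D : Prop} (h : b2n A + b2n B + b2n C + b2n D = 1) (hA : A) :
    ¬B ∧ ¬C ∧ ¬D := by
  by_cases hB : B <;> by_cases hC : C <;> by_cases hD : D <;> simp_all [b2n]
lemma known2 {A B C D : Prop} (h : b2n A + b2n B + b2n C + b2n D = 1) (hB : B) :
    ¬A ∧ ¬C ∧ ¬D := by
  by_cases hA : A <;> by_cases hC : C <;> by_cases hD : D <;> simp_all [b2n]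
lemma known3 {A B C D : Prop} (h : b2n A + b2n B + b2n C + b2n D = 1) (hC : C) :
    ¬A ∧ ¬B ∧ ¬D := by
  by_cases hA : A <;> by_cases hB : B <;> by_cases hD : D <;> simp_all [b2n]
lemma known4 {A B C D : Prop} (h : b2n A + b2n B + b2n C + b2n D = 1) (hD : D) :
    ¬A ∧ ¬B ∧ ¬C := by
  by_cases hA : A <;> by_cases hB : B <;> by_cases hC : C <;> simp_all [b2n]

lemma sum2_12 {A B C D : Prop} (h : b2n A + b2n B + b2n C + b2n D = 2) (hA : ¬A) (hB : ¬B) :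
    C ∧ D := by
  by_cases hC : C <;> by_cases hD : D <;> simp_all [b2n]
lemma sum2_34 {A B C D : Prop} (h : b2n A + b2n B + b2n C + b2n D = 2) (hC : ¬C) (hD : ¬D) :
    A ∧ B := by
  by_cases hA : A <;> by_cases hB : B <;> simp_all [b2n]

lemma le_sum1 {A B C D : Prop} (hA : A) : 1 ≤ b2n A + b2n B + b2n C + b2n D := by
  by_cases hB : B <;> by_cases hC : C <;> by_cases hD : D <;> simp_all [b2n]
lemma le_sum2 {A B C D : Prop} (hB : B) : 1 ≤ b2n A + b2n B + b2n C + b2n D := by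
  by_cases hA : A <;> by_cases hC : C <;> by_cases hD : D <;> simp_all [b2n]
lemma le_sum3 {A B C D : Prop} (hC : C) : 1 ≤ b2n A + b2n B + b2n C + b2n D := by
  by_cases hA : A <;> by_cases hB : B <;> by_cases hD : D <;> simp_all [b2n]
lemma le_sum4 {A B C D : Prop} (hD : D) : 1 ≤ b2n A + b2n B + b2n C + b2n D := by
  by_cases hA : A <;> by_cases hB : B <;> by_cases hC : C <;> simp_all [b2n]

lemma le1_13 {A B C D : Prop} (h : b2n A + b2n B + b2n C + b2n D ≤ 1) (hA : A) (hC : C) :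
    False := by
  by_cases hB : B <;> by_cases hD : D <;> simp_all [b2n]
lemma le1_14 {A B C D : Prop} (h : b2n A + b2n B + b2n C + b2n D ≤ 1) (hA : A) (hD : D) :
    False := by
  by_cases hB : B <;> by_cases hC : C <;> simp_all [b2n]
lemma le1_23 {A B C D : Prop} (h : b2n A + b2n B + b2n C + b2n D ≤ 1) (hB : B) (hC : C) :
    False := by
  by_cases hA : A <;> by_cases hD : D <;> simp_all [b2n]
lemma le1_24 {A B C D : Prop} (h : b2n A + b2n B + b2n C + b2n D ≤ 1) (hB : B) (hD : D) :
    False := by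
  by_cases hA : A <;> by_cases hC : C <;> simp_all [b2n]
lemma le1_34 {A B C D : Prop} (h : b2n A + b2n B + b2n C + b2n D ≤ 1) (hC : C) (hD : D) :
    False := by
  by_cases hA : A <;> by_cases hB : B <;> simp_all [b2n]

lemma or13 {A B C D : Prop} (h : b2n A + b2n B + b2n C + b2n D = 1) (hB : ¬B) (hD : ¬D) :
    A ∨ C := by
  by_cases hA : A <;> by_cases hC : C <;> simp_all [b2n]

def nS (occ : ℤ → ℤ → Prop) (m n : ℤ) : ℕ :=
  b2n (occ (m+1) n) + b2n (occ (m-1) n) + b2n (occ m (n+1)) + b2n (occ m (n-1))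

def dS (occ : ℤ → ℤ → Prop) (m n : ℤ) : ℕ :=
  b2n (occ (m+1) (n+1)) + b2n (occ (m+1) (n-1)) + b2n (occ (m-1) (n+1)) + b2n (occ (m-1) (n-1))

def Gd (occ : ℤ → ℤ → Prop) (m n : ℤ) : Prop :=
  (nS occ m n = 1 ∧ dS occ m n = 2) ∨ (nS occ m n = 0 ∧ dS occ m n = 0)

lemma Gd_near_le {occ : ℤ → ℤ → Prop} {m n : ℤ} (h : Gd occ m n) : nS occ m n ≤ 1 := by
  rcases h with ⟨h, _⟩ | ⟨h, _⟩ <;> omega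

lemma Gd_of_near {occ : ℤ → ℤ → Prop} {m n : ℤ} (h : Gd occ m n) (hx : 1 ≤ nS occ m n) :
    nS occ m n = 1 ∧ dS occ m n = 2 := by
  rcases h with h | ⟨h, _⟩
  · exact h
  · omega

lemma Gd_of_diag {occ : ℤ → ℤ → Prop} {m n : ℤ} (h : Gd occ m n) (hx : 1 ≤ dS occ m n) :
    nS occ m n = 1 ∧ dS occ m n = 2 := by
  rcases h with h | ⟨_, h⟩
  · exact h
  · omega

lemma nS_swap (occ : ℤ → ℤ → Prop) (m n : ℤ) :
    nS (fun x y => occ y x) m n = nS occ n m := by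
  simp only [nS]; ring

lemma dS_swap (occ : ℤ → ℤ → Prop) (m n : ℤ) :
    dS (fun x y => occ y x) m n = dS occ n m := by
  simp only [dS]; ring

lemma Gd_swap (occ : ℤ → ℤ → Prop) (m n : ℤ) :
    Gd (fun x y => occ y x) m n ↔ Gd occ n m := by
  simp only [Gd, nS_swap, dS_swap]

lemma nS_flipX (occ : ℤ → ℤ → Prop) (m n : ℤ) :
    nS (fun x y => occ (1-x) y) m n = nS occ (1-m) n := by
  simp only [nS]
  have e1 : 1-(m+1) = 1-m-1 := by ring
  have e2 : 1-(m-1) = 1-m+1 := by ring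
  rw [e1, e2]; ring

lemma dS_flipX (occ : ℤ → ℤ → Prop) (m n : ℤ) :
    dS (fun x y => occ (1-x) y) m n = dS occ (1-m) n := by
  simp only [dS]
  have e1 : 1-(m+1) = 1-m-1 := by ring
  have e2 : 1-(m-1) = 1-m+1 := by ring
  rw [e1, e2]; ring

lemma Gd_flipX (occ : ℤ → ℤ → Prop) (m n : ℤ) :
    Gd (fun x y => occ (1-x) y) m n ↔ Gd occ (1-m) n := by
  simp only [Gd, nS_flipX, dS_flipX]

lemma nS_flipY (occ : ℤ → ℤ → Prop) (m n : ℤ) :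
    nS (fun x y => occ x (1-y)) m n = nS occ m (1-n) := by
  simp only [nS]
  have e1 : 1-(n+1) = 1-n-1 := by ring
  have e2 : 1-(n-1) = 1-n+1 := by ring
  rw [e1, e2]; ring

lemma dS_flipY (occ : ℤ → ℤ → Prop) (m n : ℤ) :
    dS (fun x y => occ x (1-y)) m n = dS occ m (1-n) := by
  simp only [dS]
  have e1 : 1-(n+1) = 1-n-1 := by ring
  have e2 : 1-(n-1) = 1-n+1 := by ring
  rw [e1, e2]; ring

lemma Gd_flipY (occ : ℤ → ℤ → Prop) (m n : ℤ) :
    Gd (fun x y => occ x (1-y)) m n ↔ Gd occ m (1-n) := by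
  simp only [Gd, nS_flipY, dS_flipY]

lemma nS_flipXY (occ : ℤ → ℤ → Prop) (m n : ℤ) :
    nS (fun x y => occ (1-x) (1-y)) m n = nS occ (1-m) (1-n) := by
  simp only [nS]
  have e1 : 1-(m+1) = 1-m-1 := by ring
  have e2 : 1-(m-1) = 1-m+1 := by ring
  have e3 : 1-(n+1) = 1-n-1 := by ring
  have e4 : 1-(n-1) = 1-n+1 := by ring
  rw [e1, e2, e3, e4]; ring

lemma dS_flipXY (occ : ℤ → ℤ → Prop) (m n : ℤ) :
    dS (fun x y => occ (1-x) (1-y)) m n = dS occ (1-m) (1-n) := by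
  simp only [dS]
  have e1 : 1-(m+1) = 1-m-1 := by ring
  have e2 : 1-(m-1) = 1-m+1 := by ring
  have e3 : 1-(n+1) = 1-n-1 := by ring
  have e4 : 1-(n-1) = 1-n+1 := by ring
  rw [e1, e2, e3, e4]; ring

lemma Gd_flipXY (occ : ℤ → ℤ → Prop) (m n : ℤ) :
    Gd (fun x y => occ (1-x) (1-y)) m n ↔ Gd occ (1-m) (1-n) := by
  simp only [Gd, nS_flipXY, dS_flipXY]
lemma B_R (occ : ℤ → ℤ → Prop)
    (H : ∀ m n : ℤ, 0 ≤ m → m ≤ 3 → 0 ≤ n → n ≤ 1 → ¬occ m n → Gd occ m n)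
    (h00 : occ 0 0) (f10 : ¬occ 1 0) (f11 : ¬occ 1 1) (h21 : occ 2 1) : False := by
  have e10 : nS occ 1 0
      = b2n (occ 2 0) + b2n (occ 0 0) + b2n (occ 1 1) + b2n (occ 1 (-1)) := by norm_num [nS]
  have g1 := H 1 0 (by norm_num) (by norm_num) le_rfl (by norm_num) f10
  have hn1 := (Gd_of_near g1 (by rw [e10]; exact le_sum2 h00)).1
  rw [e10] at hn1
  obtain ⟨f20, -, f1m⟩ := known2 hn1 h00
  have e20 : nS occ 2 0
      = b2n (occ 3 0) + b2n (occ 1 0) + b2n (occ 2 1) + b2n (occ 2 (-1)) := by norm_num [nS]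
  have ed20 : dS occ 2 0
      = b2n (occ 3 1) + b2n (occ 3 (-1)) + b2n (occ 1 1) + b2n (occ 1 (-1)) := by norm_num [dS]
  have g2 := H 2 0 (by norm_num) (by norm_num) le_rfl (by norm_num) f20
  obtain ⟨hn2, hd2⟩ := Gd_of_near g2 (by rw [e20]; exact le_sum3 h21)
  rw [e20] at hn2
  rw [ed20] at hd2
  obtain ⟨f30, -, -⟩ := known3 hn2 h21
  obtain ⟨h31, h3m⟩ := sum2_34 hd2 f11 f1m
  have e30 : nS occ 3 0
      = b2n (occ 4 0) + b2n (occ 2 0) + b2n (occ 3 1) + b2n (occ 3 (-1)) := by norm_num [nS]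
  have g3 := H 3 0 (by norm_num) le_rfl le_rfl (by norm_num) f30
  have hle := Gd_near_le g3
  rw [e30] at hle
  exact le1_34 hle h31 h3m

lemma B_L (occ : ℤ → ℤ → Prop)
    (H : ∀ m n : ℤ, -1 ≤ m → m ≤ 1 → 0 ≤ n → n ≤ 1 → ¬occ m n → Gd occ m n)
    (h00 : occ 0 0) (f10 : ¬occ 1 0) (f01 : ¬occ 0 1) (f11 : ¬occ 1 1) (h21 : occ 2 1) :
    False := by
  have e11 : nS occ 1 1
      = b2n (occ 2 1) + b2n (occ 0 1) + b2n (occ 1 2) + b2n (occ 1 0) := by norm_num [nS]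
  have g1 := H 1 1 (by norm_num) le_rfl (by norm_num) le_rfl f11
  have hn1 := (Gd_of_near g1 (by rw [e11]; exact le_sum1 h21)).1
  rw [e11] at hn1
  obtain ⟨-, f12, -⟩ := known1 hn1 h21
  have e01 : nS occ 0 1
      = b2n (occ 1 1) + b2n (occ (-1) 1) + b2n (occ 0 2) + b2n (occ 0 0) := by norm_num [nS]
  have ed01 : dS occ 0 1
      = b2n (occ 1 2) + b2n (occ 1 0) + b2n (occ (-1) 2) + b2n (occ (-1) 0) := by norm_num [dS]
  have g2 := H 0 1 (by norm_num) (by norm_num) (by norm_num) le_rfl f01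
  obtain ⟨hn2, hd2⟩ := Gd_of_near g2 (by rw [e01]; exact le_sum4 h00)
  rw [e01] at hn2
  rw [ed01] at hd2
  obtain ⟨-, fm1, -⟩ := known4 hn2 h00
  obtain ⟨hm2, hm0⟩ := sum2_12 hd2 f12 f10
  have em1 : nS occ (-1) 1
      = b2n (occ 0 1) + b2n (occ (-2) 1) + b2n (occ (-1) 2) + b2n (occ (-1) 0) := by
    norm_num [nS]
  have g3 := H (-1) 1 le_rfl (by norm_num) (by norm_num) le_rfl fm1
  have hle := Gd_near_le g3
  rw [em1] at hle
  exact le1_34 hle hm2 hm0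

lemma Bbranch (occ : ℤ → ℤ → Prop) (g : Gd occ 1 1)
    (h00 : occ 0 0) (f10 : ¬occ 1 0) (f01 : ¬occ 0 1) : occ 2 1 ∨ occ 1 2 := by
  have ed : dS occ 1 1
      = b2n (occ 2 2) + b2n (occ 2 0) + b2n (occ 0 2) + b2n (occ 0 0) := by norm_num [dS]
  have hn := (Gd_of_diag g (by rw [ed]; exact le_sum4 h00)).1
  have e : nS occ 1 1
      = b2n (occ 2 1) + b2n (occ 0 1) + b2n (occ 1 2) + b2n (occ 1 0) := by norm_num [nS]
  rw [e] at hn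
  exact or13 hn f01 f10

lemma corner00 (occ : ℤ → ℤ → Prop) (s1 s2 : ℤ) (hs1 : s1 = -2 ∨ s1 = 0) (hs2 : s2 = -2 ∨ s2 = 0)
    (H : ∀ m n : ℤ, s1 ≤ m → m ≤ s1+3 → s2 ≤ n → n ≤ s2+3 → ¬occ m n → Gd occ m n)
    (h00 : occ 0 0) (f10 : ¬occ 1 0) (f01 : ¬occ 0 1) (f11 : ¬occ 1 1) : False := by
  have g11 : Gd occ 1 1 :=
    H 1 1 (by rcases hs1 with rfl|rfl <;> norm_num) (by rcases hs1 with rfl|rfl <;> norm_num)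
      (by rcases hs2 with rfl|rfl <;> norm_num) (by rcases hs2 with rfl|rfl <;> norm_num) f11
  rcases Bbranch occ g11 h00 f10 f01 with h21 | h12
  · rcases hs1 with rfl | rfl
    · exact B_L occ
        (fun m n a b c d hf => H m n (by omega) (by omega)
          (by rcases hs2 with rfl|rfl <;> omega) (by rcases hs2 with rfl|rfl <;> omega) hf)
        h00 f10 f01 f11 h21
    · exact B_R occ
        (fun m n a b c d hf => H m n (by omega) (by omega)
          (by rcases hs2 with rfl|rfl <;> omega) (by rcases hs2 with rfl|rfl <;> omega) hf)
        h00 f10 f11 h21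
  · rcases hs2 with rfl | rfl
    · exact B_L (fun x y => occ y x)
        (fun m n a b c d hf => (Gd_swap occ m n).mpr
          (H n m (by rcases hs1 with rfl|rfl <;> omega) (by rcases hs1 with rfl|rfl <;> omega)
            (by omega) (by omega) hf))
        h00 f01 f10 f11 h12
    · exact B_R (fun x y => occ y x)
        (fun m n a b c d hf => (Gd_swap occ m n).mpr
          (H n m (by rcases hs1 with rfl|rfl <;> omega) (by rcases hs1 with rfl|rfl <;> omega)
            (by omega) (by omega) hf))
        h00 f01 f11 h12

def Pat (occ : ℤ → ℤ → Prop) : Prop :=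
  (occ 0 0 ∧ occ 1 0 ∧ occ 0 1 ∧ occ 1 1) ∨
  (¬occ 0 0 ∧ ¬occ 1 0 ∧ ¬occ 0 1 ∧ ¬occ 1 1) ∨
  (occ 0 0 ∧ occ 1 0 ∧ ¬occ 0 1 ∧ ¬occ 1 1) ∨
  (¬occ 0 0 ∧ ¬occ 1 0 ∧ occ 0 1 ∧ occ 1 1) ∨
  (occ 0 0 ∧ ¬occ 1 0 ∧ occ 0 1 ∧ ¬occ 1 1) ∨
  (¬occ 0 0 ∧ occ 1 0 ∧ ¬occ 0 1 ∧ occ 1 1)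

theorem core (occ : ℤ → ℤ → Prop) (s1 s2 : ℤ)
    (hs1 : s1 = -2 ∨ s1 = 0) (hs2 : s2 = -2 ∨ s2 = 0)
    (H : ∀ m n : ℤ, s1 ≤ m → m ≤ s1+3 → s2 ≤ n → n ≤ s2+3 → ¬occ m n → Gd occ m n) :
    Pat occ := by
  have hw : ∀ m n : ℤ, 0 ≤ m → m ≤ 1 → 0 ≤ n → n ≤ 1 → ¬occ m n → Gd occ m n := by
    intro m n a b c d hf
    refine H m n ?_ ?_ ?_ ?_ hf <;> rcases hs1 with rfl|rfl <;> rcases hs2 with rfl|rfl <;> omega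
  have e11 : nS occ 1 1
      = b2n (occ 2 1) + b2n (occ 0 1) + b2n (occ 1 2) + b2n (occ 1 0) := by norm_num [nS]
  have e01 : nS occ 0 1
      = b2n (occ 1 1) + b2n (occ (-1) 1) + b2n (occ 0 2) + b2n (occ 0 0) := by norm_num [nS]
  have e10 : nS occ 1 0
      = b2n (occ 2 0) + b2n (occ 0 0) + b2n (occ 1 1) + b2n (occ 1 (-1)) := by norm_num [nS]
  have e00 : nS occ 0 0
      = b2n (occ 1 0) + b2n (occ (-1) 0) + b2n (occ 0 1) + b2n (occ 0 (-1)) := by norm_num [nS]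
  by_cases o00 : occ 0 0 <;> by_cases o10 : occ 1 0 <;>
    by_cases o01 : occ 0 1 <;> by_cases o11 : occ 1 1
  · exact Or.inl ⟨o00, o10, o01, o11⟩
  · have hle := Gd_near_le (hw 1 1 (by norm_num) le_rfl (by norm_num) le_rfl o11)
    rw [e11] at hle
    exact (le1_24 hle o01 o10).elim
  · have hle := Gd_near_le (hw 0 1 le_rfl (by norm_num) (by norm_num) le_rfl o01)
    rw [e01] at hle
    exact (le1_14 hle o11 o00).elim
  · exact Or.inr (Or.inr (Or.inl ⟨o00, o10, o01, o11⟩))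
  · have hle := Gd_near_le (hw 1 0 (by norm_num) le_rfl le_rfl (by norm_num) o10)
    rw [e10] at hle
    exact (le1_23 hle o00 o11).elim
  · exact Or.inr (Or.inr (Or.inr (Or.inr (Or.inl ⟨o00, o10, o01, o11⟩))))
  · have hle := Gd_near_le (hw 1 0 (by norm_num) le_rfl le_rfl (by norm_num) o10)
    rw [e10] at hle
    exact (le1_23 hle o00 o11).elim
  · exact (corner00 occ s1 s2 hs1 hs2 H o00 o10 o01 o11).elim
  · have hle := Gd_near_le (hw 0 0 le_rfl (by norm_num) le_rfl (by norm_num) o00)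
    rw [e00] at hle
    exact (le1_13 hle o10 o01).elim
  · have hle := Gd_near_le (hw 0 0 le_rfl (by norm_num) le_rfl (by norm_num) o00)
    rw [e00] at hle
    exact (le1_13 hle o10 o01).elim
  · exact Or.inr (Or.inr (Or.inr (Or.inr (Or.inr ⟨o00, o10, o01, o11⟩))))
  · exact (corner00 (fun x y => occ (1-x) y) (-2-s1) s2
      (by rcases hs1 with rfl|rfl <;> norm_num) hs2
      (fun m n a b c d hf => (Gd_flipX occ m n).mpr (H (1-m) n (by omega) (by omega) c d hf))
      (by simpa using o10) (by simpa using o00) (by simpa using o11) (by simpa using o01)).elim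
  · exact Or.inr (Or.inr (Or.inr (Or.inl ⟨o00, o10, o01, o11⟩)))
  · exact (corner00 (fun x y => occ x (1-y)) s1 (-2-s2)
      hs1 (by rcases hs2 with rfl|rfl <;> norm_num)
      (fun m n a b c d hf => (Gd_flipY occ m n).mpr (H m (1-n) a b (by omega) (by omega) hf))
      (by simpa using o01) (by simpa using o11) (by simpa using o00) (by simpa using o10)).elim
  · exact (corner00 (fun x y => occ (1-x) (1-y)) (-2-s1) (-2-s2)
      (by rcases hs1 with rfl|rfl <;> norm_num) (by rcases hs2 with rfl|rfl <;> norm_num)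
      (fun m n a b c d hf => (Gd_flipXY occ m n).mpr
        (H (1-m) (1-n) (by omega) (by omega) (by omega) (by omega) hf))
      (by simpa using o11) (by simpa using o01) (by simpa using o10) (by simpa using o00)).elim
  · exact Or.inr (Or.inl ⟨o00, o10, o01, o11⟩)

def pk (ε : ℝ) (k : E2) (m n : ℤ) : E2 :=
  WithLp.toLp 2 (fun j : Fin 2 => if j = 0 then k 0 + ε*m else k 1 + ε*n)

lemma pk0 (ε : ℝ) (k : E2) (m n : ℤ) : pk ε k m n 0 = k 0 + ε*m := by simp [pk]
lemma pk1 (ε : ℝ) (k : E2) (m n : ℤ) : pk ε k m n 1 = k 1 + ε*n := by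
  simp [pk]

lemma dist2 (x y : E2) : dist x y = Real.sqrt ((x 0 - y 0)^2 + (x 1 - y 1)^2) := by
  rw [EuclideanSpace.dist_eq, Fin.sum_univ_two, Real.dist_eq, Real.dist_eq, sq_abs, sq_abs]

lemma dist_pk {ε : ℝ} (hε : 0 ≤ ε) (k : E2) (m n m' n' : ℤ) :
    dist (pk ε k m n) (pk ε k m' n')
      = ε * Real.sqrt (((m - m' : ℤ) : ℝ)^2 + ((n - n' : ℤ) : ℝ)^2) := by
  rw [dist2, pk0, pk0, pk1, pk1]
  rw [show (k 0 + ε*m - (k 0 + ε*m'))^2 + (k 1 + ε*n - (k 1 + ε*n'))^2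
      = ε^2 * (((m - m' : ℤ) : ℝ)^2 + ((n - n' : ℤ) : ℝ)^2) by push_cast; ring]
  rw [Real.sqrt_mul (sq_nonneg ε), Real.sqrt_sq hε]

lemma pk_lat {ε : ℝ} {k : E2} {K0 K1 : ℤ} (e0 : k 0 = ε * K0) (e1 : k 1 = ε * K1)
    (m n : ℤ) : lat2 ε (pk ε k m n) := by
  intro j
  by_cases hj : j = 0
  · exact ⟨K0 + m, by rw [hj, pk0, e0]; push_cast; ring⟩
  · rw [Fin.eq_one_of_ne_zero j hj]
    exact ⟨K1 + n, by rw [pk1, e1]; push_cast; ring⟩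

lemma pk_inj {ε : ℝ} (hε : 0 < ε) {k : E2} {m n m' n' : ℤ}
    (h : pk ε k m n = pk ε k m' n') : m = m' ∧ n = n' := by
  have h0 := congrFun (congrArg WithLp.ofLp h) 0
  have h1 := congrFun (congrArg WithLp.ofLp h) 1
  rw [pk0, pk0] at h0
  rw [pk1, pk1] at h1
  constructor
  · have : (m : ℝ) = m' := by
      have := mul_left_cancel₀ hε.ne' (by linarith : ε * (m:ℝ) = ε * m')
      exact this
    exact_mod_cast this
  · have : (n : ℝ) = n' := by
      have := mul_left_cancel₀ hε.ne' (by linarith : ε * (n:ℝ) = ε * n')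
      exact this
    exact_mod_cast this

lemma close_pt {ε : ℝ} (hε : 0 < ε) {k : E2} {K0 K1 : ℤ}
    (e0 : k 0 = ε * K0) (e1 : k 1 = ε * K1) {q : E2} (hq : lat2 ε q) (m n : ℤ) :
    ∃ u v : ℤ, q = pk ε k (m+u) (n+v) := by
  obtain ⟨a, ha⟩ := hq 0
  obtain ⟨b, hb⟩ := hq 1
  refine ⟨a - K0 - m, b - K1 - n, PiLp.ext fun j => ?_⟩
  by_cases hj : j = 0
  · rw [hj, pk0, ha, e0]; push_cast; ring
  · rw [Fin.eq_one_of_ne_zero j hj, pk1, hb, e1]; push_cast; ring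

section
variable {ε : ℝ} {k : E2} {K0 K1 : ℤ}

lemma Nset_pk (hε : 0 < ε) (e0 : k 0 = ε*K0) (e1 : k 1 = ε*K1) (E : Set E2) (m n : ℤ) :
    Nset ε E (pk ε k m n)
      = ({pk ε k (m+1) n, pk ε k (m-1) n, pk ε k m (n+1), pk ε k m (n-1)} : Set E2) \ E := by
  ext q
  simp only [Nset, Set.mem_setOf_eq, Set.mem_diff, Set.mem_insert_iff, Set.mem_singleton_iff]
  constructor
  · rintro ⟨hlat, hqE, hd⟩
    obtain ⟨u, v, rfl⟩ := close_pt hε e0 e1 hlat m n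
    refine ⟨?_, hqE⟩
    rw [dist_pk hε.le] at hd
    have hd' : Real.sqrt ((u:ℝ)^2 + (v:ℝ)^2) = 1 := by
      rw [show ((m+u-m : ℤ):ℝ) = (u:ℝ) by push_cast; ring,
          show ((n+v-n : ℤ):ℝ) = (v:ℝ) by push_cast; ring] at hd
      refine mul_left_cancel₀ hε.ne' ?_
      rw [mul_one]; exact hd
    have huv : u^2 + v^2 = 1 := by
      have h0 : (0:ℝ) ≤ (u:ℝ)^2 + (v:ℝ)^2 := by positivity
      have h2 : ((u:ℝ)^2 + (v:ℝ)^2) = 1 := by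
        have hs := Real.sq_sqrt h0
        rw [hd'] at hs
        rw [one_pow] at hs
        linarith
      exact_mod_cast h2
    have hu1 : -1 ≤ u := by nlinarith [sq_nonneg v]
    have hu2 : u ≤ 1 := by nlinarith [sq_nonneg v]
    have hv1 : -1 ≤ v := by nlinarith [sq_nonneg u]
    have hv2 : v ≤ 1 := by nlinarith [sq_nonneg u]
    interval_cases u <;> interval_cases v <;> norm_num at huv <;> norm_num <;> ring_nf <;> tauto
  · rintro ⟨(rfl | rfl | rfl | rfl), hqE⟩ <;>
      refine ⟨pk_lat e0 e1 _ _, hqE, ?_⟩ <;>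
      rw [dist_pk hε.le] <;> push_cast <;> ring_nf <;> norm_num

lemma NNset_pk (hε : 0 < ε) (e0 : k 0 = ε*K0) (e1 : k 1 = ε*K1) (E : Set E2) (m n : ℤ) :
    NNset ε E (pk ε k m n)
      = ({pk ε k (m+1) (n+1), pk ε k (m+1) (n-1), pk ε k (m-1) (n+1), pk ε k (m-1) (n-1)} :
          Set E2) \ E := by
  ext q
  simp only [NNset, Set.mem_setOf_eq, Set.mem_diff, Set.mem_insert_iff, Set.mem_singleton_iff]
  constructor
  · rintro ⟨hlat, hqE, hd⟩
    obtain ⟨u, v, rfl⟩ := close_pt hε e0 e1 hlat m n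
    refine ⟨?_, hqE⟩
    rw [dist_pk hε.le] at hd
    have hd' : Real.sqrt ((u:ℝ)^2 + (v:ℝ)^2) = Real.sqrt 2 := by
      rw [show ((m+u-m : ℤ):ℝ) = (u:ℝ) by push_cast; ring,
          show ((n+v-n : ℤ):ℝ) = (v:ℝ) by push_cast; ring, mul_comm] at hd
      exact mul_right_cancel₀ hε.ne' hd
    have huv : u^2 + v^2 = 2 := by
      have h0 : (0:ℝ) ≤ (u:ℝ)^2 + (v:ℝ)^2 := by positivity
      have h2 : ((u:ℝ)^2 + (v:ℝ)^2) = 2 := by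
        have hs := Real.sq_sqrt h0
        rw [hd'] at hs
        rw [Real.sq_sqrt (by norm_num : (0:ℝ) ≤ 2)] at hs
        linarith
      exact_mod_cast h2
    have hu1 : -1 ≤ u := by nlinarith [sq_nonneg v]
    have hu2 : u ≤ 1 := by nlinarith [sq_nonneg v]
    have hv1 : -1 ≤ v := by nlinarith [sq_nonneg u]
    have hv2 : v ≤ 1 := by nlinarith [sq_nonneg u]
    interval_cases u <;> interval_cases v <;> norm_num at huv <;> norm_num <;> ring_nf <;> tauto
  · rintro ⟨(rfl | rfl | rfl | rfl), hqE⟩ <;>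
      refine ⟨pk_lat e0 e1 _ _, hqE, ?_⟩ <;>
      rw [dist_pk hε.le] <;> push_cast <;> ring_nf <;>
      rw [show (1:ℝ)+1 = 2 by norm_num] <;> ring

end

lemma solve31 {X : ℕ} (h : 3 + X = 4) : X = 1 := by omega
lemma solve22 {X : ℕ} (h : 2 + X = 4) : X = 2 := by omega
lemma solve40 {X : ℕ} (h : 4 + X = 4) : X = 0 := by omega

lemma ncard4 {a b c d : E2} (hab : a ≠ b) (hac : a ≠ c) (had : a ≠ d) (hbc : b ≠ c)
    (hbd : b ≠ d) (hcd : c ≠ d) (E : Set E2) :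
    (({a,b,c,d} : Set E2) \ E).ncard
      + (b2n (a ∈ E) + b2n (b ∈ E) + b2n (c ∈ E) + b2n (d ∈ E)) = 4 := by
  classical
  have hset : ({a,b,c,d} : Set E2) \ E
      = ↑(({a,b,c,d} : Finset E2).filter (fun x => x ∉ E)) := by
    ext x
    simp only [Set.mem_diff, Set.mem_insert_iff, Set.mem_singleton_iff, Finset.coe_filter,
      Finset.mem_insert, Finset.mem_singleton, Set.mem_setOf_eq]
  rw [hset, Set.ncard_coe_finset]
  have hcard : ({a,b,c,d} : Finset E2).card = 4 := by
    rw [Finset.card_insert_of_notMem (by simp [hab, hac, had]),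
        Finset.card_insert_of_notMem (by simp [hbc, hbd]),
        Finset.card_insert_of_notMem (by simp [hcd]), Finset.card_singleton]
  have hsplit := Finset.card_filter_add_card_filter_not
    (s := ({a,b,c,d} : Finset E2)) (p := fun x => x ∈ E)
  have hfil : (({a,b,c,d} : Finset E2).filter (fun x => x ∈ E)).card
      = b2n (a ∈ E) + b2n (b ∈ E) + b2n (c ∈ E) + b2n (d ∈ E) := by
    rw [Finset.card_filter]
    rw [Finset.sum_insert (by simp [hab, hac, had]),
        Finset.sum_insert (by simp [hbc, hbd]),
        Finset.sum_insert (by simp [hcd]), Finset.sum_singleton]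
    simp only [b2n]
    ring
  rw [← hfil, Nat.add_comm]
  rw [hcard] at hsplit
  exact hsplit

section
variable {ε : ℝ} {k : E2} {K0 K1 : ℤ}

lemma nS_ncard (hε : 0 < ε) (e0 : k 0 = ε*K0) (e1 : k 1 = ε*K1) (E : Set E2) (m n : ℤ) :
    (Nset ε E (pk ε k m n)).ncard + nS (fun x y => pk ε k x y ∈ E) m n = 4 := by
  rw [Nset_pk hε e0 e1 E m n]
  exact ncard4
    (fun h => by obtain ⟨h1, _⟩ := pk_inj hε h; omega)
    (fun h => by obtain ⟨h1, h2⟩ := pk_inj hε h; omega)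
    (fun h => by obtain ⟨h1, h2⟩ := pk_inj hε h; omega)
    (fun h => by obtain ⟨h1, h2⟩ := pk_inj hε h; omega)
    (fun h => by obtain ⟨h1, h2⟩ := pk_inj hε h; omega)
    (fun h => by obtain ⟨h1, h2⟩ := pk_inj hε h; omega) E

lemma dS_ncard (hε : 0 < ε) (e0 : k 0 = ε*K0) (e1 : k 1 = ε*K1) (E : Set E2) (m n : ℤ) :
    (NNset ε E (pk ε k m n)).ncard + dS (fun x y => pk ε k x y ∈ E) m n = 4 := by
  rw [NNset_pk hε e0 e1 E m n]
  exact ncard4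
    (fun h => by obtain ⟨h1, h2⟩ := pk_inj hε h; omega)
    (fun h => by obtain ⟨h1, h2⟩ := pk_inj hε h; omega)
    (fun h => by obtain ⟨h1, h2⟩ := pk_inj hε h; omega)
    (fun h => by obtain ⟨h1, h2⟩ := pk_inj hε h; omega)
    (fun h => by obtain ⟨h1, h2⟩ := pk_inj hε h; omega)
    (fun h => by obtain ⟨h1, h2⟩ := pk_inj hε h; omega) E

lemma pk_mem_sq (hε : 0 < ε) (m n : ℤ) (hm : m = 0 ∨ m = 1) (hn : n = 0 ∨ n = 1) :
    pk ε k m n ∈ sq2 (2*ε) (hat2 ε k) := by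
  intro j
  by_cases hj : j = 0
  · subst hj
    rw [pk0]
    simp only [hat2]
    rcases hm with rfl | rfl <;> push_cast <;> constructor <;> linarith
  · rw [Fin.eq_one_of_ne_zero j hj, pk1]
    simp only [hat2]
    rcases hn with rfl | rfl <;> push_cast <;> constructor <;> linarith

lemma pk00_eq : pk ε k 0 0 = k := by
  ext j
  by_cases hj : j = 0
  · subst hj; rw [pk0]; push_cast; ring
  · rw [Fin.eq_one_of_ne_zero j hj, pk1]; push_cast; ring

lemma pk10_eq : pk ε k 1 0 = pt2 (k 0 + ε) (k 1) := by
  ext j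
  by_cases hj : j = 0
  · subst hj; rw [pk0]; simp [pt2]
  · rw [Fin.eq_one_of_ne_zero j hj, pk1]; simp [pt2]

lemma pk01_eq : pk ε k 0 1 = pt2 (k 0) (k 1 + ε) := by
  ext j
  by_cases hj : j = 0
  · subst hj; rw [pk0]; simp [pt2]
  · rw [Fin.eq_one_of_ne_zero j hj, pk1]; simp [pt2]

lemma pk11_eq : pk ε k 1 1 = pt2 (k 0 + ε) (k 1 + ε) := by
  ext j
  by_cases hj : j = 0
  · subst hj; rw [pk0]; simp [pt2]
  · rw [Fin.eq_one_of_ne_zero j hj, pk1]; simp [pt2]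

lemma mem_sq_iff (hε : 0 < ε) (e0 : k 0 = ε*K0) (e1 : k 1 = ε*K1) (q : E2) (hq : lat2 ε q)
    (hmem : q ∈ sq2 (2*ε) (hat2 ε k)) :
    q = pk ε k 0 0 ∨ q = pk ε k 1 0 ∨ q = pk ε k 0 1 ∨ q = pk ε k 1 1 := by
  obtain ⟨u, v, rfl⟩ := close_pt hε e0 e1 hq 0 0
  have h0 := hmem 0
  have h1 := hmem 1
  rw [pk0] at h0
  rw [pk1] at h1
  rw [show ((0+u:ℤ):ℝ) = (u:ℝ) by push_cast; ring] at h0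
  rw [show ((0+v:ℤ):ℝ) = (v:ℝ) by push_cast; ring] at h1
  simp only [hat2] at h0 h1
  have hu0 : (0:ℤ) ≤ u := by
    have hur : (-1:ℝ) < (u:ℝ) := by nlinarith [h0.1, hε]
    have : (-1:ℤ) < u := by exact_mod_cast hur
    omega
  have hu1 : u ≤ 1 := by
    have hur : (u:ℝ) < 2 := by nlinarith [h0.2, hε]
    have : u < (2:ℤ) := by exact_mod_cast hur
    omega
  have hv0 : (0:ℤ) ≤ v := by
    have hvr : (-1:ℝ) < (v:ℝ) := by nlinarith [h1.1, hε]
    have : (-1:ℤ) < v := by exact_mod_cast hvr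
    omega
  have hv1 : v ≤ 1 := by
    have hvr : (v:ℝ) < 2 := by nlinarith [h1.2, hε]
    have : v < (2:ℤ) := by exact_mod_cast hvr
    omega
  interval_cases u <;> interval_cases v <;> norm_num

end

/-- EAM example.  If every unoccupied lattice point of `Q_η(i)` has
neighbourhood statistics `(3,2)` or `(4,4)`, then `E` is locally flat in
`Q_{η-4ε}(i)`. -/
theorem statement10 (ε η : ℝ) (hε : 0 < ε) (hη : 10 * ε ≤ η)
    (i : E2) (hi : lat2 ε i)
    (E : Set E2) (hE : ∀ x ∈ E, lat2 ε x)
    (hgood : ∀ j : E2, lat2 ε j → j ∈ sq2 η i → j ∉ E → goodPt ε E j) :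
    LocallyFlat2 ε (η - 4 * ε) E i := by
  intro k hk hne
  obtain ⟨K0, e0⟩ := hk 0
  obtain ⟨K1, e1⟩ := hk 1
  obtain ⟨y, hy1, hy2⟩ := hne
  have hy10 := hy1 0
  have hy11 := hy1 1
  have hy20 := hy2 0
  have hy21 := hy2 1
  simp only [hat2] at hy20 hy21
  have hb0a : i 0 - η/2 + ε/2 < k 0 := by
    obtain ⟨u1, u2⟩ := hy10; obtain ⟨w1, w2⟩ := hy20; linarith
  have hb0b : k 0 < i 0 + η/2 - 3*ε/2 := by
    obtain ⟨u1, u2⟩ := hy10; obtain ⟨w1, w2⟩ := hy20; linarith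
  have hb1a : i 1 - η/2 + ε/2 < k 1 := by
    obtain ⟨u1, u2⟩ := hy11; obtain ⟨w1, w2⟩ := hy21; linarith
  have hb1b : k 1 < i 1 + η/2 - 3*ε/2 := by
    obtain ⟨u1, u2⟩ := hy11; obtain ⟨w1, w2⟩ := hy21; linarith
  have hwin0 : ∃ s : ℤ, (s = -2 ∨ s = 0) ∧
      ∀ d : ℤ, s ≤ d → d ≤ s+3 → i 0 - η/2 ≤ k 0 + ε*d ∧ k 0 + ε*d < i 0 + η/2 := by
    by_cases hc : i 0 - η/2 ≤ k 0 - 2*ε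
    · refine ⟨-2, Or.inl rfl, fun d hd1 hd2 => ?_⟩
      have hd2' : d ≤ 1 := by omega
      have hr1 : (-2:ℝ) ≤ (d:ℝ) := by exact_mod_cast hd1
      have hr2 : (d:ℝ) ≤ 1 := by exact_mod_cast hd2'
      constructor
      · linarith [mul_le_mul_of_nonneg_left hr1 hε.le]
      · linarith [mul_le_mul_of_nonneg_left hr2 hε.le]
    · push_neg at hc
      refine ⟨0, Or.inr rfl, fun d hd1 hd2 => ?_⟩
      have hd2' : d ≤ 3 := by omega
      have hr1 : (0:ℝ) ≤ (d:ℝ) := by exact_mod_cast hd1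
      have hr2 : (d:ℝ) ≤ 3 := by exact_mod_cast hd2'
      constructor
      · linarith [mul_le_mul_of_nonneg_left hr1 hε.le]
      · linarith [mul_le_mul_of_nonneg_left hr2 hε.le]
  have hwin1 : ∃ s : ℤ, (s = -2 ∨ s = 0) ∧
      ∀ d : ℤ, s ≤ d → d ≤ s+3 → i 1 - η/2 ≤ k 1 + ε*d ∧ k 1 + ε*d < i 1 + η/2 := by
    by_cases hc : i 1 - η/2 ≤ k 1 - 2*ε
    · refine ⟨-2, Or.inl rfl, fun d hd1 hd2 => ?_⟩
      have hd2' : d ≤ 1 := by omega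
      have hr1 : (-2:ℝ) ≤ (d:ℝ) := by exact_mod_cast hd1
      have hr2 : (d:ℝ) ≤ 1 := by exact_mod_cast hd2'
      constructor
      · linarith [mul_le_mul_of_nonneg_left hr1 hε.le]
      · linarith [mul_le_mul_of_nonneg_left hr2 hε.le]
    · push_neg at hc
      refine ⟨0, Or.inr rfl, fun d hd1 hd2 => ?_⟩
      have hd2' : d ≤ 3 := by omega
      have hr1 : (0:ℝ) ≤ (d:ℝ) := by exact_mod_cast hd1
      have hr2 : (d:ℝ) ≤ 3 := by exact_mod_cast hd2'
      constructor
      · linarith [mul_le_mul_of_nonneg_left hr1 hε.le]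
      · linarith [mul_le_mul_of_nonneg_left hr2 hε.le]
  obtain ⟨s1, hs1, hw1⟩ := hwin0
  obtain ⟨s2, hs2, hw2⟩ := hwin1
  have HGd : ∀ m n : ℤ, s1 ≤ m → m ≤ s1+3 → s2 ≤ n → n ≤ s2+3 →
      ¬ (fun x y => pk ε k x y ∈ E) m n → Gd (fun x y => pk ε k x y ∈ E) m n := by
    intro m n ha hb hc hd hf
    have hmem : pk ε k m n ∈ sq2 η i := by
      intro j
      by_cases hj : j = 0
      · subst hj
        rw [pk0]
        exact hw1 m ha hb
      · rw [Fin.eq_one_of_ne_zero j hj, pk1]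
        exact hw2 n hc hd
    rcases hgood (pk ε k m n) (pk_lat e0 e1 m n) hmem hf with ⟨h3, h2⟩ | ⟨h4, h4'⟩
    · left
      constructor
      · have h := nS_ncard hε e0 e1 E m n
        rw [h3] at h
        exact solve31 h
      · have h := dS_ncard hε e0 e1 E m n
        rw [h2] at h
        exact solve22 h
    · right
      constructor
      · have h := nS_ncard hε e0 e1 E m n
        rw [h4] at h
        exact solve40 h
      · have h := dS_ncard hε e0 e1 E m n
        rw [h4'] at h
        exact solve40 h
  have HPat := core (fun x y => pk ε k x y ∈ E) s1 s2 hs1 hs2 HGd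
  rcases HPat with ⟨p1,p2,p3,p4⟩|⟨p1,p2,p3,p4⟩|⟨p1,p2,p3,p4⟩|⟨p1,p2,p3,p4⟩|⟨p1,p2,p3,p4⟩|⟨p1,p2,p3,p4⟩
  · left
    ext x
    constructor
    · rintro ⟨hxE, hxsq⟩
      exact ⟨hE x hxE, hxsq⟩
    · rintro ⟨hlat, hsq'⟩
      refine ⟨?_, hsq'⟩
      rcases mem_sq_iff hε e0 e1 x hlat hsq' with rfl|rfl|rfl|rfl
      exacts [p1, p2, p3, p4]
  · right; left
    apply Set.eq_empty_iff_forall_notMem.mpr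
    rintro x ⟨hxE, hxsq⟩
    rcases mem_sq_iff hε e0 e1 x (hE x hxE) hxsq with rfl|rfl|rfl|rfl
    exacts [p1 hxE, p2 hxE, p3 hxE, p4 hxE]
  · right; right; left
    ext x
    simp only [Set.mem_inter_iff, Set.mem_insert_iff, Set.mem_singleton_iff]
    constructor
    · rintro ⟨hxE, hxsq⟩
      rcases mem_sq_iff hε e0 e1 x (hE x hxE) hxsq with rfl|rfl|rfl|rfl
      · exact Or.inl pk00_eq
      · exact Or.inr pk10_eq
      · exact absurd hxE p3
      · exact absurd hxE p4
    · rintro (hx | hx) <;> rw [hx]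
      · constructor
        · have hp : pk ε k 0 0 ∈ E := p1
          rw [pk00_eq] at hp; exact hp
        · have hm := pk_mem_sq (k := k) hε 0 0 (Or.inl rfl) (Or.inl rfl)
          rw [pk00_eq] at hm; exact hm
      · constructor
        · have hp : pk ε k 1 0 ∈ E := p2
          rw [pk10_eq] at hp; exact hp
        · have hm := pk_mem_sq (k := k) hε 1 0 (Or.inr rfl) (Or.inl rfl)
          rw [pk10_eq] at hm; exact hm
  · right; right; right; left
    ext x
    simp only [Set.mem_inter_iff, Set.mem_insert_iff, Set.mem_singleton_iff]
    constructor
    · rintro ⟨hxE, hxsq⟩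
      rcases mem_sq_iff hε e0 e1 x (hE x hxE) hxsq with rfl|rfl|rfl|rfl
      · exact absurd hxE p1
      · exact absurd hxE p2
      · exact Or.inl pk01_eq
      · exact Or.inr pk11_eq
    · rintro (hx | hx) <;> rw [hx]
      · constructor
        · have hp : pk ε k 0 1 ∈ E := p3
          rw [pk01_eq] at hp; exact hp
        · have hm := pk_mem_sq (k := k) hε 0 1 (Or.inl rfl) (Or.inr rfl)
          rw [pk01_eq] at hm; exact hm
      · constructor
        · have hp : pk ε k 1 1 ∈ E := p4
          rw [pk11_eq] at hp; exact hp
        · have hm := pk_mem_sq (k := k) hε 1 1 (Or.inr rfl) (Or.inr rfl)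
          rw [pk11_eq] at hm; exact hm
  · right; right; right; right; left
    ext x
    simp only [Set.mem_inter_iff, Set.mem_insert_iff, Set.mem_singleton_iff]
    constructor
    · rintro ⟨hxE, hxsq⟩
      rcases mem_sq_iff hε e0 e1 x (hE x hxE) hxsq with rfl|rfl|rfl|rfl
      · exact Or.inl pk00_eq
      · exact absurd hxE p2
      · exact Or.inr pk01_eq
      · exact absurd hxE p4
    · rintro (hx | hx) <;> rw [hx]
      · constructor
        · have hp : pk ε k 0 0 ∈ E := p1
          rw [pk00_eq] at hp; exact hp
        · have hm := pk_mem_sq (k := k) hε 0 0 (Or.inl rfl) (Or.inl rfl)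
          rw [pk00_eq] at hm; exact hm
      · constructor
        · have hp : pk ε k 0 1 ∈ E := p3
          rw [pk01_eq] at hp; exact hp
        · have hm := pk_mem_sq (k := k) hε 0 1 (Or.inl rfl) (Or.inr rfl)
          rw [pk01_eq] at hm; exact hm
  · right; right; right; right; right
    ext x
    simp only [Set.mem_inter_iff, Set.mem_insert_iff, Set.mem_singleton_iff]
    constructor
    · rintro ⟨hxE, hxsq⟩
      rcases mem_sq_iff hε e0 e1 x (hE x hxE) hxsq with rfl|rfl|rfl|rfl
      · exact absurd hxE p1
      · exact Or.inl pk10_eq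
      · exact absurd hxE p3
      · exact Or.inr pk11_eq
    · rintro (hx | hx) <;> rw [hx]
      · constructor
        · have hp : pk ε k 1 0 ∈ E := p2
          rw [pk10_eq] at hp; exact hp
        · have hm := pk_mem_sq (k := k) hε 1 0 (Or.inr rfl) (Or.inl rfl)
          rw [pk10_eq] at hm; exact hm
      · constructor
        · have hp : pk ε k 1 1 ∈ E := p4
          rw [pk11_eq] at hp; exact hp
        · have hm := pk_mem_sq (k := k) hε 1 1 (Or.inr rfl) (Or.inr rfl)
          rw [pk11_eq] at hm; exact hm
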